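/- Let R = (Z/qZ)^{ω} for an integer q > 1 (the full product ring). For every finite index additive subgroup H of (R,+), the set R·H = {r·h : r ∈ R, h ∈ H} contains an ideal of R of index less than q^{[R:H]}. -/
import Mathlib


open Pointwise

namespace Stmt16Aux

variable {q : ℕ} (H : AddSubgroup (ℕ → ZMod q))

/-- The additive subgroup of functions supported on `A`. -/
def RA (q : ℕ) (A : Set ℕ) : AddSubgroup (ℕ → ZMod q) where
  carrier := {x | ∀ i ∉ A, x i = 0}
  zero_mem' := fun _ _ => rfl
  add_mem' := by
    intro a b ha hb
    intro i hi
    simp only [Pi.add_apply, ha i hi, hb i hi, add_zero]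
  neg_mem' := by
    intro a ha i hi
    simp only [Pi.neg_apply, ha i hi, neg_zero]

lemma RA_mono {A B : Set ℕ} (h : A ⊆ B) : RA q A ≤ RA q B :=
  fun _ hx i hi => hx i fun hA => hi (h hA)

/-- `A` is good if `H` contains an element which is a unit on all of `A`. -/
def Good (A : Set ℕ) : Prop := ∃ h ∈ H, ∀ i ∈ A, IsUnit (h i)

lemma Good.mono {A B : Set ℕ} (hAB : A ⊆ B) (hB : Good H B) : Good H A := by
  obtain ⟨h, hh, hu⟩ := hB
  exact ⟨h, hh, fun i hi => hu i (hAB hi)⟩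

/-- If `A` is good, any `x` supported on `A` lies in `R·H`. -/
lemma mem_of_good {A : Set ℕ} (hA : Good H A) (x : ℕ → ZMod q)
    (hx : ∀ i, x i ≠ 0 → i ∈ A) :
    x ∈ (Set.univ : Set (ℕ → ZMod q)) * (H : Set (ℕ → ZMod q)) := by
  obtain ⟨h, hh, hu⟩ := hA
  have hx' : x = (fun i => x i * Ring.inverse (h i)) * h := by
    funext i
    by_cases hxi : x i = 0
    · simp [Pi.mul_apply, hxi]
    · exact (Ring.inverse_mul_cancel_right _ _ (hu i (hx i hxi))).symm
  rw [hx']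
  exact Set.mul_mem_mul (Set.mem_univ _) hh

/-- The quotient map. -/
noncomputable def phi : (ℕ → ZMod q) →+ (ℕ → ZMod q) ⧸ H := QuotientAddGroup.mk' H

/-- Key step: if the image of every remaining fiber is contained in the image of
the union of the fibers over `K`, then the complement of the `K`-fibers is good. -/
lemma claim {β : Type} [Fintype β] [DecidableEq β] (τ : ℕ → β) (K : Finset β)
    (hyp : ∀ c ∉ K, (RA q {i | τ i = c}).map (phi H) ≤ (RA q {i | τ i ∈ K}).map (phi H)) :
    Good H {i | τ i ∉ K} := by
  classical
  set e : β → (ℕ → ZMod q) := fun c i => if τ i = c then 1 else 0 with he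
  set oneB : ℕ → ZMod q := fun i => if τ i ∈ K then 0 else 1 with honeB
  have hsum : oneB = ∑ c ∈ Finset.univ \ K, e c := by
    funext i
    rw [Finset.sum_apply]
    simp only [he]
    rw [Finset.sum_congr rfl (fun c _ => by rw [show (if τ i = c then (1:ZMod q) else 0)
      = if c = τ i then (1:ZMod q) else 0 from by simp [eq_comm]])]
    rw [Finset.sum_ite_eq' (Finset.univ \ K) (τ i) (fun _ => (1 : ZMod q))]
    by_cases h : τ i ∈ K <;> simp [honeB, h]
  have hmem : (phi H) oneB ∈ (RA q {i | τ i ∈ K}).map (phi H) := by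
    rw [hsum, map_sum]
    refine AddSubgroup.sum_mem _ fun c hc => ?_
    have hcK : c ∉ K := (Finset.mem_sdiff.mp hc).2
    refine hyp c hcK ?_
    refine AddSubgroup.mem_map.mpr ⟨e c, ?_, rfl⟩
    intro i hi
    simp only [Set.mem_setOf_eq] at hi
    simp [he, hi]
  obtain ⟨w, hw, hwe⟩ := AddSubgroup.mem_map.mp hmem
  refine ⟨oneB - w, ?_, ?_⟩
  · have h0 : (phi H) (oneB - w) = 0 := by rw [map_sub, hwe, sub_self]
    have : oneB - w ∈ (QuotientAddGroup.mk' H).ker := AddMonoidHom.mem_ker.mpr h0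
    rwa [QuotientAddGroup.ker_mk'] at this
  · intro i hi
    simp only [Set.mem_setOf_eq] at hi
    have hwi : w i = 0 := hw i (by simpa using hi)
    simp only [Pi.sub_apply, hwi, sub_zero, honeB, if_neg hi]
    exact isUnit_one

/-- Greedy construction: one can find a small `K` such that the complement of its
fibers is good. -/
lemma greedy [Finite ((ℕ → ZMod q) ⧸ H)] {β : Type} [Fintype β] [DecidableEq β]
    (τ : ℕ → β) :
    ∀ (d : ℕ) (K : Finset β), (∀ c ∈ K, ∃ i, τ i = c) →
      K.card < Nat.card ((RA q {i | τ i ∈ K}).map (phi H)) →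
      Nat.card ((ℕ → ZMod q) ⧸ H) ≤ d + Nat.card ((RA q {i | τ i ∈ K}).map (phi H)) →
      ∃ K' : Finset β, (∀ c ∈ K', ∃ i, τ i = c) ∧
        K'.card < Nat.card ((ℕ → ZMod q) ⧸ H) ∧ Good H {i | τ i ∉ K'} := by
  intro d
  induction d with
  | zero =>
    intro K hfib hcard hle
    simp only [Nat.zero_add] at hle
    have htop : (RA q {i | τ i ∈ K}).map (phi H) = ⊤ :=
      AddSubgroup.eq_top_of_le_card _ hle
    refine ⟨K, hfib, lt_of_lt_of_le hcard (Nat.card_le_card_of_injective _ Subtype.coe_injective), ?_⟩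
    exact claim H τ K (fun c _ => by rw [htop]; exact le_top)
  | succ d ih =>
    intro K hfib hcard hle
    by_cases hg : Good H {i | τ i ∉ K}
    · exact ⟨K, hfib, lt_of_lt_of_le hcard (Nat.card_le_card_of_injective _ Subtype.coe_injective), hg⟩
    · have hex : ∃ c ∉ K,
          ¬ (RA q {i | τ i = c}).map (phi H) ≤ (RA q {i | τ i ∈ K}).map (phi H) := by
        by_contra hcon
        push_neg at hcon
        exact hg (claim H τ K hcon)
      obtain ⟨c, hcK, hnle⟩ := hex
      obtain ⟨g, hgc, hgK⟩ := SetLike.not_le_iff_exists.mp hnle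
      -- the fiber of c is nonempty
      have hfibc : ∃ i, τ i = c := by
        by_contra hfc
        push_neg at hfc
        obtain ⟨x, hxc, hxg⟩ := AddSubgroup.mem_map.mp hgc
        have hx0 : x = 0 := by
          funext i
          exact hxc i (by simp [hfc i])
        rw [hx0, map_zero] at hxg
        exact hgK (hxg ▸ AddSubgroup.zero_mem _)
      -- the subgroup strictly grows
      have hsub : (RA q {i | τ i ∈ K}).map (phi H) ≤ (RA q {i | τ i ∈ insert c K}).map (phi H) :=
        AddSubgroup.map_mono (RA_mono (fun i hi => by
          simp only [Set.mem_setOf_eq] at *; exact Finset.mem_insert_of_mem hi))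
      have hgin : g ∈ (RA q {i | τ i ∈ insert c K}).map (phi H) := by
        refine AddSubgroup.map_mono (RA_mono (fun i hi => by
          simp only [Set.mem_setOf_eq] at *; rw [hi]; exact Finset.mem_insert_self c K)) hgc
      have hlt : Nat.card ((RA q {i | τ i ∈ K}).map (phi H))
          < Nat.card ((RA q {i | τ i ∈ insert c K}).map (phi H)) := by
        have key : ((RA q {i | τ i ∈ K}).map (phi H) : Set ((ℕ → ZMod q) ⧸ H)).ncard
            < ((RA q {i | τ i ∈ insert c K}).map (phi H) : Set ((ℕ → ZMod q) ⧸ H)).ncard := by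
          refine Set.ncard_lt_ncard ?_ (Set.toFinite _)
          exact ⟨hsub, fun hsub' => hgK (hsub' hgin)⟩
        rw [← Nat.card_coe_set_eq, ← Nat.card_coe_set_eq] at key
        exact key
      have hfib' : ∀ c' ∈ insert c K, ∃ i, τ i = c' := by
        intro c' hc'
        rcases Finset.mem_insert.mp hc' with h | h
        · exact h ▸ hfibc
        · exact hfib c' h
      have hcard' : (insert c K).card < Nat.card ((RA q {i | τ i ∈ insert c K}).map (phi H)) := by
        calc (insert c K).card ≤ K.card + 1 := Finset.card_insert_le _ _
        _ < Nat.card ((RA q {i | τ i ∈ K}).map (phi H)) + 1 := by omega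
        _ ≤ Nat.card ((RA q {i | τ i ∈ insert c K}).map (phi H)) := hlt
      exact ih (insert c K) hfib' hcard' (by omega)

/-- Finite version: finitely many bad sets can be pierced by `index - 1` principal
ultrafilters. -/
lemma finite_lemma [Finite ((ℕ → ZMod q) ⧸ H)] (u : Finset (Set ℕ))
    (hu : ∀ A ∈ u, ¬ Good H A) :
    ∃ p : Fin (H.index - 1) → Ultrafilter ℕ, ∀ A ∈ u, ∃ j, A ∈ p j := by
  classical
  set n := Nat.card ((ℕ → ZMod q) ⧸ H) with hn
  have hindex : H.index = n := rfl
  set β := {A : Set ℕ // A ∈ u} with hβ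
  set τ : ℕ → (β → Bool) := fun i A => decide (i ∈ (A : Set ℕ)) with hτ
  have h0 : (∅ : Finset (β → Bool)).card
      < Nat.card ((RA q {i | τ i ∈ (∅ : Finset (β → Bool))}).map (phi H)) := by
    simp only [Finset.card_empty]
    haveI : Nonempty ((RA q {i | τ i ∈ (∅ : Finset (β → Bool))}).map (phi H)) :=
      ⟨⟨0, AddSubgroup.zero_mem _⟩⟩
    exact Nat.card_pos
  obtain ⟨K', hfib, hcard, hgood⟩ := greedy H τ n ∅ (by simp) h0 (Nat.le_add_right _ _)
  -- representatives of fibers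
  set rep : (β → Bool) → ℕ := fun c => if h : ∃ i, τ i = c then h.choose else 0 with hrep
  set L := K'.toList with hL
  have hLlen : L.length = K'.card := Finset.length_toList _
  have hlen : L.length ≤ H.index - 1 := by
    rw [hLlen, hindex]
    have hnz : n ≠ 0 := by
      have : Nonempty ((ℕ → ZMod q) ⧸ H) := ⟨0⟩
      simp [hn, Nat.card_pos.ne']
    omega
  refine ⟨fun j => (pure (rep (L.getD j (fun _ => true))) : Ultrafilter ℕ), ?_⟩
  intro A hA
  have hbad : ¬ Good H A := hu A hA
  have hnsub : ¬ (A ⊆ {i | τ i ∉ K'}) := fun hsub => hbad (Good.mono H hsub hgood)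
  obtain ⟨i, hiA, hiK⟩ := Set.not_subset.mp hnsub
  simp only [Set.mem_setOf_eq, not_not] at hiK
  -- find position of the color τ i in the list L
  have hmemL : τ i ∈ L := by rw [hL]; exact Finset.mem_toList.mpr hiK
  obtain ⟨k, hk, hkeq⟩ := List.mem_iff_getElem.mp hmemL
  have hkm : k < H.index - 1 := lt_of_lt_of_le hk hlen
  refine ⟨⟨k, hkm⟩, ?_⟩
  have hgetD : L.getD k (fun _ => true) = τ i := by
    rw [List.getD_eq_getElem L _ hk]
    exact hkeq
  show A ∈ (pure (rep (L.getD k fun _ => true)) : Ultrafilter ℕ)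
  rw [hgetD]
  -- rep (τ i) ∈ A
  have hex : ∃ i', τ i' = τ i := ⟨i, rfl⟩
  have hrepel : τ (rep (τ i)) = τ i := by
    rw [hrep]
    simp only [dif_pos hex]
    exact hex.choose_spec
  have : rep (τ i) ∈ A := by
    have := congrFun hrepel (⟨A, hA⟩ : β)
    simp only [hτ] at this
    have hiAtrue : decide (i ∈ A) = true := by simpa using hiA
    rw [hiAtrue] at this
    simpa using this
  exact Ultrafilter.mem_pure.mpr this

/-- Compactness: there are `index - 1` ultrafilters catching all bad sets. -/
lemma exists_ultrafilters [Finite ((ℕ → ZMod q) ⧸ H)] :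
    ∃ p : Fin (H.index - 1) → Ultrafilter ℕ,
      ∀ A : Set ℕ, ¬ Good H A → ∃ j, A ∈ p j := by
  classical
  set m := H.index - 1 with hm
  set ι := {A : Set ℕ // ¬ Good H A} with hι
  set Z : ι → Set (Fin m → Ultrafilter ℕ) := fun A => {p | ∃ j, (A : Set ℕ) ∈ p j} with hZ
  have hZc : ∀ A, IsClosed (Z A) := by
    intro A
    have : Z A = ⋃ j, (fun p : Fin m → Ultrafilter ℕ => p j) ⁻¹' {U | (A : Set ℕ) ∈ U} := by
      ext p; simp [hZ]
    rw [this]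
    exact isClosed_iUnion_of_finite fun j =>
      (ultrafilter_isClosed_basic _).preimage (continuous_apply j)
  have hne : (⋂ A, Z A).Nonempty := by
    by_contra hcon
    rw [Set.not_nonempty_iff_eq_empty] at hcon
    obtain ⟨t, ht⟩ := IsCompact.elim_finite_subfamily_closed isCompact_univ Z hZc
      (by rw [Set.univ_inter]; exact hcon)
    obtain ⟨p, hp⟩ := finite_lemma H (t.image Subtype.val)
      (by intro A hA
          obtain ⟨B, _, hBA⟩ := Finset.mem_image.mp hA
          exact hBA ▸ B.2)
    have : p ∈ Set.univ ∩ ⋂ A ∈ t, Z A := by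
      refine ⟨Set.mem_univ _, ?_⟩
      refine Set.mem_iInter₂.mpr fun A hA => ?_
      exact hp A.1 (Finset.mem_image_of_mem _ hA)
    rw [ht] at this
    exact this
  obtain ⟨p, hp⟩ := hne
  refine ⟨p, fun A hA => ?_⟩
  exact Set.mem_iInter.mp hp ⟨A, hA⟩

section ulim

variable [NeZero q]

lemma exists_ulim (U : Ultrafilter ℕ) (x : ℕ → ZMod q) : ∃ a, {i | x i = a} ∈ U := by
  have hcov : (⋃ a ∈ (Set.univ : Set (ZMod q)), {i | x i = a}) ∈ U := by
    have : (⋃ a ∈ (Set.univ : Set (ZMod q)), {i | x i = a}) = Set.univ := by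
      ext i; simp
    rw [this]; exact Filter.univ_mem
  obtain ⟨a, _, ha⟩ := (Ultrafilter.finite_biUnion_mem_iff Set.finite_univ).mp hcov
  exact ⟨a, ha⟩

/-- The limit of `x` along the ultrafilter `U`. -/
noncomputable def ulim (U : Ultrafilter ℕ) (x : ℕ → ZMod q) : ZMod q :=
  (exists_ulim U x).choose

lemma ulim_spec (U : Ultrafilter ℕ) (x : ℕ → ZMod q) : {i | x i = ulim U x} ∈ U :=
  (exists_ulim U x).choose_spec

lemma ulim_eq (U : Ultrafilter ℕ) (x : ℕ → ZMod q) {a : ZMod q}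
    (ha : {i | x i = a} ∈ U) : ulim U x = a := by
  by_contra hne
  have hint : ({i | x i = ulim U x} ∩ {i | x i = a}) ∈ U :=
    Filter.inter_mem (ulim_spec U x) ha
  have : ({i | x i = ulim U x} ∩ {i | x i = a}) = ∅ := by
    ext i
    simp only [Set.mem_inter_iff, Set.mem_setOf_eq, Set.mem_empty_iff_false, iff_false]
    rintro ⟨h1, h2⟩
    exact hne (h1 ▸ h2 ▸ rfl)
  rw [this] at hint
  exact Filter.empty_notMem _ hint

/-- The ultralimit homomorphism. -/
noncomputable def Phi {m : ℕ} (p : Fin m → Ultrafilter ℕ) :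
    (ℕ → ZMod q) →+ (Fin m → ZMod q) :=
  AddMonoidHom.mk' (fun x j => ulim (p j) x) (by
    intro x y
    funext j
    refine ulim_eq (p j) (x + y) ?_
    refine Filter.mem_of_superset (Filter.inter_mem (ulim_spec (p j) x) (ulim_spec (p j) y)) ?_
    rintro i ⟨h1, h2⟩
    simp only [Set.mem_setOf_eq] at *
    simp [h1, h2])

end ulim

end Stmt16Aux

open Stmt16Aux in
/-- For R = (Z/qZ)^ω with q > 1 and any finite index additive subgroup H of
(R,+), the set R·H contains an ideal of R of additive index less than q^[R:H]. -/
theorem stmt_16 (q : ℕ) (hq : 1 < q) (H : AddSubgroup (ℕ → ZMod q))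
    (hH : H.FiniteIndex) :
    ∃ I : Ideal (ℕ → ZMod q),
      (I : Set (ℕ → ZMod q)) ⊆ Set.univ * (H : Set (ℕ → ZMod q)) ∧
      I.toAddSubgroup.index ≠ 0 ∧
      I.toAddSubgroup.index < q ^ H.index := by
  classical
  haveI : NeZero q := ⟨by omega⟩
  have hn0 : H.index ≠ 0 := hH.index_ne_zero
  haveI hfin : Finite ((ℕ → ZMod q) ⧸ H) := Nat.finite_of_card_ne_zero hn0
  obtain ⟨p, hp⟩ := exists_ultrafilters H
  -- the ideal
  set I : Ideal (ℕ → ZMod q) :=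
    { carrier := {x | ∀ j, {i | x i = 0} ∈ p j}
      zero_mem' := by
        intro j
        have : {i | (0 : ℕ → ZMod q) i = 0} = Set.univ := by ext i; simp
        rw [this]; exact Filter.univ_mem
      add_mem' := by
        intro a b ha hb j
        refine Filter.mem_of_superset (Filter.inter_mem (ha j) (hb j)) ?_
        rintro i ⟨h1, h2⟩
        simp only [Set.mem_setOf_eq] at *
        simp [h1, h2]
      smul_mem' := by
        intro c x hx j
        refine Filter.mem_of_superset (hx j) ?_
        intro i hi
        simp only [Set.mem_setOf_eq] at *
        simp [hi] } with hI
  refine ⟨I, ?_, ?_⟩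
  · -- I ⊆ univ * H
    intro x hx
    have hx' : ∀ j, {i | x i = 0} ∈ p j := hx
    have hgood : Good H {i | x i ≠ 0} := by
      by_contra hbad
      obtain ⟨j, hj⟩ := hp _ hbad
      have h1 : {i | x i = 0} ∈ (p j : Filter ℕ) := hx' j
      have h2 : {i | x i ≠ 0} ∈ (p j : Filter ℕ) := hj
      have hint : ({i | x i = 0} ∩ {i | x i ≠ 0}) ∈ (p j : Filter ℕ) := Filter.inter_mem h1 h2
      have : ({i | x i = 0} ∩ {i | x i ≠ 0}) = ∅ := by
        ext i
        simp only [Set.mem_inter_iff, Set.mem_setOf_eq, Set.mem_empty_iff_false, iff_false]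
        rintro ⟨h1, h2⟩; exact h2 h1
      rw [this] at hint
      exact absurd hint (Filter.empty_notMem _)
    exact mem_of_good H hgood x (fun i hi => hi)
  · -- index bounds
    have hker : I.toAddSubgroup = (Phi p).ker := by
      ext x
      simp only [Submodule.mem_toAddSubgroup, AddMonoidHom.mem_ker]
      constructor
      · intro hx
        funext j
        exact ulim_eq (p j) x (hx j)
      · intro hx j
        have := ulim_spec (p j) x
        rw [show ulim (p j) x = 0 from congrFun hx j] at this
        exact this
    have hcard : (Phi (q := q) p).ker.index = Nat.card (Phi (q := q) p).range :=
      AddSubgroup.index_ker _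
    have hle : Nat.card (Phi (q := q) p).range ≤ q ^ (H.index - 1) := by
      have h1 : Nat.card (Phi (q := q) p).range
          ≤ Nat.card (Fin (H.index - 1) → ZMod q) :=
        Nat.card_le_card_of_injective _ Subtype.val_injective
      have h2 : Nat.card (Fin (H.index - 1) → ZMod q) = q ^ (H.index - 1) := by
        rw [Nat.card_eq_fintype_card, Fintype.card_fun, ZMod.card, Fintype.card_fin]
      omega
    have hpos : 0 < Nat.card (Phi (q := q) p).range := by
      haveI : Nonempty (Phi (q := q) p).range := ⟨⟨0, AddSubgroup.zero_mem _⟩⟩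
      exact Nat.card_pos
    constructor
    · rw [hker, hcard]; omega
    · rw [hker, hcard]
      have : q ^ (H.index - 1) < q ^ H.index := Nat.pow_lt_pow_right hq (by omega)
      omega
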